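/- Let d ≥ 1, K > 0, ρ > 0. Let ψ ∈ C²(ℝ^d) be nonnegative with |∂^α ψ(x)| ≤ K for all x and all multi-indices 1 ≤ |α| ≤ 2, and let V₀ ∈ C¹(ℝ^d) with |V₀(x)| ≤ K and |∇V₀(x)| ≤ K for all x. For λ > 0 set φ = e^{λψ} and define the symbols p_R(x,ξ) = |ξ|² − |∇φ(x)|² − V₀(x) and p_I(x,ξ) = 2ξ·∇φ(x) on ℝ^d×ℝ^d, with Poisson bracket {p_R,p_I} = ∂_ξ p_R·∂_x p_I − ∂_x p_R·∂_ξ p_I. Then there exist λ₀ ≥ 1 and C > 0, depending only on d, K, ρ, such that for all λ ≥ λ₀ and all (x,ξ) with |∇ψ(x)| ≥ ρ and (1/4)(|∇φ(x)|² + V₀(x)) ≤ |ξ|² ≤ 4(|∇φ(x)|² + V₀(x)): {p_R,p_I}(x,ξ) ≥ C λ³ e^{3λψ(x)} > 0. -/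

import Mathlib

/-!
STATEMENT 14: pointwise sub-ellipticity of the conjugated Carleman symbol.
With `φ = e^{λψ}`, `p_R(x,ξ) = |ξ|² − |∇φ(x)|² − V₀(x)` and
`p_I(x,ξ) = 2ξ·∇φ(x)`, for `λ` large the Poisson bracket `{p_R,p_I}`
satisfies `{p_R,p_I}(x,ξ) ≥ Cλ³e^{3λψ(x)} > 0` on the characteristic region
where `|∇ψ(x)| ≥ ρ` and `(1/4)(|∇φ|²+V₀) ≤ |ξ|² ≤ 4(|∇φ|²+V₀)`.
-/

open Real RealInnerProductSpace

/-- The exponential Carleman weight `φ = e^{λψ}`. -/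
noncomputable def carlemanPhi {d : ℕ} (lam : ℝ)
    (ψ : EuclideanSpace ℝ (Fin d) → ℝ) : EuclideanSpace ℝ (Fin d) → ℝ :=
  fun x => Real.exp (lam * ψ x)

/-- The real part `p_R(x,ξ) = |ξ|² − |∇φ(x)|² − V₀(x)` of the conjugated symbol. -/
noncomputable def pRsymb {d : ℕ} (lam : ℝ)
    (ψ V₀ : EuclideanSpace ℝ (Fin d) → ℝ)
    (x ξ : EuclideanSpace ℝ (Fin d)) : ℝ :=
  ‖ξ‖ ^ 2 - ‖gradient (carlemanPhi lam ψ) x‖ ^ 2 - V₀ x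

/-- The imaginary part `p_I(x,ξ) = 2 ξ·∇φ(x)` of the conjugated symbol. -/
noncomputable def pIsymb {d : ℕ} (lam : ℝ)
    (ψ : EuclideanSpace ℝ (Fin d) → ℝ)
    (x ξ : EuclideanSpace ℝ (Fin d)) : ℝ :=
  2 * ⟪ξ, gradient (carlemanPhi lam ψ) x⟫

/-- Poisson bracket `{f,g} = ∂_ξ f·∂_x g − ∂_x f·∂_ξ g` of two symbols on
`ℝ^d × ℝ^d`. -/
noncomputable def poissonBracket {d : ℕ}
    (f g : EuclideanSpace ℝ (Fin d) → EuclideanSpace ℝ (Fin d) → ℝ)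
    (x ξ : EuclideanSpace ℝ (Fin d)) : ℝ :=
  ⟪gradient (fun ξ' => f x ξ') ξ, gradient (fun x' => g x' ξ) x⟫
    - ⟪gradient (fun x' => f x' ξ) x, gradient (fun ξ' => g x ξ') ξ⟫

section AuxCarleman

open InnerProductSpace

variable {d : ℕ} {lam : ℝ} {ψ V₀ : EuclideanSpace ℝ (Fin d) → ℝ}

local notation "E" => EuclideanSpace ℝ (Fin d)

lemma inner_gradient_apply (f : E → ℝ) (x v : E) :
    ⟪gradient f x, v⟫ = fderiv ℝ f x v := toDual_symm_apply

lemma inner_gradient_apply' (f : E → ℝ) (x v : E) :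
    ⟪v, gradient f x⟫ = fderiv ℝ f x v := by
  rw [real_inner_comm]; exact toDual_symm_apply

/-- Real-linear continuous version of `(toDual ℝ E).symm`. -/
noncomputable def gradCLM (d : ℕ) :
    (EuclideanSpace ℝ (Fin d) →L[ℝ] ℝ) →L[ℝ] EuclideanSpace ℝ (Fin d) :=
  LinearMap.mkContinuous
    { toFun := fun L => (toDual ℝ (EuclideanSpace ℝ (Fin d))).symm L
      map_add' := fun a b => map_add _ a b
      map_smul' := fun c L => by
        simp [LinearIsometryEquiv.map_smulₛₗ, starRingEnd_apply] }
    1 (fun L => by simp [LinearIsometryEquiv.norm_map])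

@[simp] lemma gradCLM_apply (L : E →L[ℝ] ℝ) :
    gradCLM d L = (toDual ℝ E).symm L := rfl

lemma inner_gradCLM_apply (L : E →L[ℝ] ℝ) (v : E) :
    ⟪gradCLM d L, v⟫ = L v := by
  rw [gradCLM_apply]; exact toDual_symm_apply

lemma inner_gradCLM_apply' (v : E) (L : E →L[ℝ] ℝ) :
    ⟪v, gradCLM d L⟫ = L v := by
  rw [real_inner_comm]; exact inner_gradCLM_apply L v

lemma carlemanPhi_hasFDerivAt (hψ : ContDiff ℝ 2 ψ) (y : E) :
    HasFDerivAt (carlemanPhi lam ψ) ((lam * carlemanPhi lam ψ y) • fderiv ℝ ψ y) y := by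
  have h1 : HasFDerivAt ψ (fderiv ℝ ψ y) y :=
    ((hψ.differentiable (by norm_num)) y).hasFDerivAt
  have h2 : HasFDerivAt (fun z => lam * ψ z) (lam • fderiv ℝ ψ y) y := h1.const_mul lam
  have h3 := h2.exp
  rw [smul_smul, mul_comm _ lam] at h3
  exact h3

lemma carlemanPhi_gradient (hψ : ContDiff ℝ 2 ψ) (y : E) :
    gradient (carlemanPhi lam ψ) y = (lam * carlemanPhi lam ψ y) • gradient ψ y := by
  have h := (carlemanPhi_hasFDerivAt (lam := lam) hψ y).hasGradientAt.gradient
  rw [h, map_smul]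
  rfl

lemma fderiv_apply_self_gradient (f : E → ℝ) (x : E) :
    fderiv ℝ f x (gradient f x) = ‖gradient f x‖ ^ 2 := by
  rw [← inner_gradient_apply, real_inner_self_eq_norm_sq]

lemma hasFDerivAt_fderiv_psi (hψ : ContDiff ℝ 2 ψ) (x : E) :
    HasFDerivAt (fderiv ℝ ψ) (fderiv ℝ (fderiv ℝ ψ) x) x := by
  have h1 : ContDiff ℝ 1 (fderiv ℝ ψ) := hψ.fderiv_right (by norm_num)
  exact ((h1.differentiable one_ne_zero) x).hasFDerivAt

/-- value of the `x`-derivative of `p_I(·,ξ)` at direction `ξ`. -/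
lemma pI_x_fderiv (hψ : ContDiff ℝ 2 ψ) (x ξ : E) :
    fderiv ℝ (fun x' => pIsymb lam ψ x' ξ) x ξ
      = 2 * ((lam * carlemanPhi lam ψ x) * (fderiv ℝ (fderiv ℝ ψ) x ξ ξ)
          + fderiv ℝ ψ x ξ * (lam * ((lam * carlemanPhi lam ψ x) * fderiv ℝ ψ x ξ))) := by
  have hc : HasFDerivAt (fun x' => lam * carlemanPhi lam ψ x')
      (lam • ((lam * carlemanPhi lam ψ x) • fderiv ℝ ψ x)) x :=
    (carlemanPhi_hasFDerivAt hψ x).const_mul lam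
  have hEval : HasFDerivAt (fun x' => fderiv ℝ ψ x' ξ)
      ((ContinuousLinearMap.apply ℝ ℝ ξ).comp (fderiv ℝ (fderiv ℝ ψ) x)) x :=
    ((ContinuousLinearMap.apply ℝ ℝ ξ).hasFDerivAt).comp x (hasFDerivAt_fderiv_psi hψ x)
  have hprod := (hc.mul hEval).const_mul (2:ℝ)
  have hfunI : (fun x' => pIsymb lam ψ x' ξ)
      = fun x' => 2 * ((lam * carlemanPhi lam ψ x') * fderiv ℝ ψ x' ξ) := by
    funext y
    rw [pIsymb, carlemanPhi_gradient hψ y, real_inner_smul_right, inner_gradient_apply']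
  rw [hfunI, (show HasFDerivAt (fun x' => 2 * ((lam * carlemanPhi lam ψ x') * fderiv ℝ ψ x' ξ)) _ x
    from hprod).fderiv]
  simp only [ContinuousLinearMap.smul_apply, ContinuousLinearMap.add_apply,
    ContinuousLinearMap.comp_apply, ContinuousLinearMap.apply_apply, smul_eq_mul]

/-- value of the `x`-derivative of `p_R(·,ξ)` at direction `∇φ(x)`. -/
lemma pR_x_fderiv (hψ : ContDiff ℝ 2 ψ) (hV : ContDiff ℝ 1 V₀) (x ξ : E) :
    fderiv ℝ (fun x' => pRsymb lam ψ V₀ x' ξ) x (gradient (carlemanPhi lam ψ) x)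
      = -(2 * (lam ^ 4 * carlemanPhi lam ψ x ^ 3 * ‖gradient ψ x‖ ^ 4
          + lam ^ 3 * carlemanPhi lam ψ x ^ 3
              * fderiv ℝ (fderiv ℝ ψ) x (gradient ψ x) (gradient ψ x)))
        - lam * carlemanPhi lam ψ x * fderiv ℝ V₀ x (gradient ψ x) := by
  have hc : HasFDerivAt (fun x' => lam * carlemanPhi lam ψ x')
      (lam • ((lam * carlemanPhi lam ψ x) • fderiv ℝ ψ x)) x :=
    (carlemanPhi_hasFDerivAt hψ x).const_mul lam
  have hgψ : HasFDerivAt (gradient ψ) ((gradCLM d).comp (fderiv ℝ (fderiv ℝ ψ) x)) x := by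
    have h := ((gradCLM d).hasFDerivAt (x := fderiv ℝ ψ x)).comp x (hasFDerivAt_fderiv_psi hψ x)
    have heq : (⇑(gradCLM d) ∘ fderiv ℝ ψ) = gradient ψ := by
      funext y
      simp [gradient, Function.comp]
    rwa [heq] at h
  set G' : E →L[ℝ] E :=
    (lam * carlemanPhi lam ψ x) • ((gradCLM d).comp (fderiv ℝ (fderiv ℝ ψ) x))
      + (lam • ((lam * carlemanPhi lam ψ x) • fderiv ℝ ψ x)).smulRight (gradient ψ x)
    with hG'def
  have hGat : HasFDerivAt (fun y => (lam * carlemanPhi lam ψ y) • gradient ψ y) G' x :=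
    hc.smul hgψ
  have hInner := (hGat.inner (𝕜 := ℝ) hGat)
  have hVd : HasFDerivAt V₀ (fderiv ℝ V₀ x) x := ((hV.differentiable one_ne_zero) x).hasFDerivAt
  have hfunR : (fun x' => pRsymb lam ψ V₀ x' ξ)
      = fun x' => ‖ξ‖ ^ 2
          - ⟪(lam * carlemanPhi lam ψ x') • gradient ψ x',
              (lam * carlemanPhi lam ψ x') • gradient ψ x'⟫ - V₀ x' := by
    funext y
    rw [pRsymb, carlemanPhi_gradient hψ y, real_inner_self_eq_norm_sq]
  have hfR := ((hasFDerivAt_const (‖ξ‖ ^ 2) x).sub hInner).sub hVd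
  rw [hfunR, (show HasFDerivAt (fun x' => ‖ξ‖ ^ 2
          - ⟪(lam * carlemanPhi lam ψ x') • gradient ψ x',
              (lam * carlemanPhi lam ψ x') • gradient ψ x'⟫ - V₀ x') _ x from hfR).fderiv,
    carlemanPhi_gradient hψ x]
  set a : E := (lam * carlemanPhi lam ψ x) • gradient ψ x with hadef
  have hGa : G' a
      = ((lam * carlemanPhi lam ψ x) * (lam * carlemanPhi lam ψ x))
          • (gradCLM d (fderiv ℝ (fderiv ℝ ψ) x (gradient ψ x)))
        + (lam * ((lam * carlemanPhi lam ψ x)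
            * ((lam * carlemanPhi lam ψ x) * ‖gradient ψ x‖ ^ 2))) • gradient ψ x := by
    simp only [hG'def, hadef, ContinuousLinearMap.add_apply, ContinuousLinearMap.smul_apply,
      ContinuousLinearMap.comp_apply, ContinuousLinearMap.smulRight_apply, map_smul,
      ContinuousLinearMap.coe_smul', Pi.smul_apply, smul_eq_mul]
    rw [fderiv_apply_self_gradient]
    module
  have h1 : ⟪a, G' a⟫
      = lam ^ 3 * carlemanPhi lam ψ x ^ 3
          * fderiv ℝ (fderiv ℝ ψ) x (gradient ψ x) (gradient ψ x)
        + lam ^ 4 * carlemanPhi lam ψ x ^ 3 * ‖gradient ψ x‖ ^ 4 := by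
    rw [hGa, inner_add_right, real_inner_smul_right, real_inner_smul_right,
      inner_gradCLM_apply', hadef]
    rw [ContinuousLinearMap.map_smul, real_inner_smul_left, real_inner_self_eq_norm_sq]
    simp only [smul_eq_mul]
    ring
  have h2 : ⟪G' a, a⟫
      = lam ^ 3 * carlemanPhi lam ψ x ^ 3
          * fderiv ℝ (fderiv ℝ ψ) x (gradient ψ x) (gradient ψ x)
        + lam ^ 4 * carlemanPhi lam ψ x ^ 3 * ‖gradient ψ x‖ ^ 4 := by
    rw [real_inner_comm]; exact h1
  have h3 : fderiv ℝ V₀ x a = (lam * carlemanPhi lam ψ x) * fderiv ℝ V₀ x (gradient ψ x) := by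
    rw [hadef, ContinuousLinearMap.map_smul, smul_eq_mul]
  simp only [ContinuousLinearMap.sub_apply, ContinuousLinearMap.zero_apply,
    ContinuousLinearMap.comp_apply, ContinuousLinearMap.prod_apply, fderivInnerCLM_apply,
    ContinuousLinearMap.coe_sub', Pi.sub_apply]
  rw [h3]
  have h12 : ⟪a, G' a⟫ + ⟪G' a, a⟫
      = 2 * (lam ^ 3 * carlemanPhi lam ψ x ^ 3
          * fderiv ℝ (fderiv ℝ ψ) x (gradient ψ x) (gradient ψ x)
        + lam ^ 4 * carlemanPhi lam ψ x ^ 3 * ‖gradient ψ x‖ ^ 4) := by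
    rw [h1, h2]; ring
  rw [h12]
  ring

lemma bracket_formula (hψ : ContDiff ℝ 2 ψ) (hV : ContDiff ℝ 1 V₀) (x ξ : E) :
    poissonBracket (pRsymb lam ψ V₀) (pIsymb lam ψ) x ξ =
      4 * (lam ^ 2 * Real.exp (lam * ψ x) * (fderiv ℝ ψ x ξ) ^ 2
        + lam * Real.exp (lam * ψ x) * fderiv ℝ (fderiv ℝ ψ) x ξ ξ)
      + 4 * (lam ^ 4 * Real.exp (lam * ψ x) ^ 3 * ‖gradient ψ x‖ ^ 4
        + lam ^ 3 * Real.exp (lam * ψ x) ^ 3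
            * fderiv ℝ (fderiv ℝ ψ) x (gradient ψ x) (gradient ψ x))
      + 2 * (lam * Real.exp (lam * ψ x) * fderiv ℝ V₀ x (gradient ψ x)) := by
  have hg1 : gradient (fun ξ' => pRsymb lam ψ V₀ x ξ') ξ = (2:ℝ) • ξ := by
    have hn : HasFDerivAt (fun ξ' : E => ‖ξ'‖ ^ 2) (toDual ℝ E ((2:ℝ) • ξ)) ξ := by
      have h := (hasFDerivAt_id (𝕜 := ℝ) ξ).inner ℝ (hasFDerivAt_id ξ)
      have heq : (fun t : E => ⟪id t, id t⟫) = fun t : E => ‖t‖ ^ 2 :=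
        funext fun t => real_inner_self_eq_norm_sq t
      rw [heq] at h
      refine h.congr_fderiv ?_
      apply ContinuousLinearMap.ext; intro v
      simp only [toDual_apply_apply, ContinuousLinearMap.comp_apply, ContinuousLinearMap.prod_apply,
        ContinuousLinearMap.coe_id', id_eq, fderivInnerCLM_apply, real_inner_smul_left]
      rw [real_inner_comm v]
      ring
    have hfd : HasFDerivAt (fun ξ' : E => pRsymb lam ψ V₀ x ξ') (toDual ℝ E ((2:ℝ) • ξ)) ξ := by
      simpa [pRsymb] using
        (hn.sub_const (‖gradient (carlemanPhi lam ψ) x‖ ^ 2)).sub_const (V₀ x)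
    have h := hfd.hasGradientAt.gradient
    simpa using h
  have hg4 : gradient (fun ξ' => pIsymb lam ψ x ξ') ξ
      = (2:ℝ) • gradient (carlemanPhi lam ψ) x := by
    have hfun : (fun ξ' : E => pIsymb lam ψ x ξ')
        = ⇑(toDual ℝ E ((2:ℝ) • gradient (carlemanPhi lam ψ) x)) := by
      funext v
      rw [pIsymb, show ((toDual ℝ E) ((2:ℝ) • gradient (carlemanPhi lam ψ) x)) v
          = ⟪(2:ℝ) • gradient (carlemanPhi lam ψ) x, v⟫ from toDual_apply_apply,
        real_inner_smul_left, real_inner_comm v]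
    have hfd : HasFDerivAt (fun ξ' : E => pIsymb lam ψ x ξ')
        (toDual ℝ E ((2:ℝ) • gradient (carlemanPhi lam ψ) x)) ξ := by
      rw [hfun]
      exact (toDual ℝ E ((2:ℝ) • gradient (carlemanPhi lam ψ) x)).hasFDerivAt
    have h := hfd.hasGradientAt.gradient
    rw [h]; exact (toDual ℝ E).symm_apply_apply _
  rw [poissonBracket, hg1, hg4, real_inner_smul_left, real_inner_smul_right,
    inner_gradient_apply', inner_gradient_apply, pI_x_fderiv hψ, pR_x_fderiv hψ hV]
  simp only [show carlemanPhi lam ψ x = Real.exp (lam * ψ x) from rfl]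
  ring

lemma norm_fderiv_eq_iteratedFDeriv_one (f : E → ℝ) (x : E) :
    ‖fderiv ℝ f x‖ = ‖iteratedFDeriv ℝ 1 f x‖ := by
  rw [← norm_iteratedFDeriv_fderiv (n := 0), norm_iteratedFDeriv_zero]

lemma norm_fderiv2_eq_iteratedFDeriv_two (f : E → ℝ) (x : E) :
    ‖fderiv ℝ (fderiv ℝ f) x‖ = ‖iteratedFDeriv ℝ 2 f x‖ := by
  rw [← norm_iteratedFDeriv_fderiv (n := 1),
    ← norm_iteratedFDeriv_fderiv (n := 0), norm_iteratedFDeriv_zero]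

lemma norm_gradient_eq (f : E → ℝ) (x : E) :
    ‖gradient f x‖ = ‖fderiv ℝ f x‖ := by
  show ‖(toDual ℝ E).symm (fderiv ℝ f x)‖ = _
  exact LinearIsometryEquiv.norm_map _ _

lemma fderiv_eq_inner_gradientV (f : E → ℝ) (x v : E) :
    fderiv ℝ f x v = ⟪gradient f x, v⟫ := (inner_gradient_apply f x v).symm

end AuxCarleman

lemma carleman_key_arith (K ρ lam e nξ gn A B1 B2 B3 : ℝ)
    (hK : 0 < K) (hρ : 0 < ρ) (hlam1 : 1 ≤ lam) (he1 : 1 ≤ e)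
    (hρg : ρ ≤ gn) (hgK : gn ≤ K) (hnξ : 0 ≤ nξ)
    (hB1 : |B1| ≤ K * nξ * nξ) (hB2 : |B2| ≤ K * gn * gn) (hB3 : |B3| ≤ K * K)
    (hupp : nξ ^ 2 ≤ 4 * (K ^ 2 + K) * (lam ^ 2 * e ^ 2))
    (hlam : (16 * K * (K ^ 2 + K) + 4 * K ^ 3 + 2 * K ^ 2 + 2 * ρ ^ 4) / (4 * ρ ^ 4) ≤ lam) :
    2 * ρ ^ 4 * lam ^ 3 * e ^ 3 ≤
      4 * (lam ^ 2 * e * A ^ 2 + lam * e * B1)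
        + 4 * (lam ^ 4 * e ^ 3 * gn ^ 4 + lam ^ 3 * e ^ 3 * B2)
        + 2 * (lam * e * B3) := by
  have hepos : (0:ℝ) < e := lt_of_lt_of_le one_pos he1
  have hlampos : (0:ℝ) < lam := lt_of_lt_of_le one_pos hlam1
  have hgn : (0:ℝ) < gn := lt_of_lt_of_le hρ hρg
  have h12 : (1:ℝ) ≤ lam * e := by nlinarith
  have hsq1 : (1:ℝ) ≤ lam ^ 2 * e ^ 2 := by nlinarith [sq_nonneg (lam * e - 1)]
  have hA1 : (0:ℝ) ≤ 4 * (lam ^ 2 * e * A ^ 2) := by positivity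
  have hB1' : -(K * nξ ^ 2) ≤ B1 := by nlinarith [neg_abs_le B1]
  have hA2 : -(16 * K * (K ^ 2 + K)) * (lam ^ 3 * e ^ 3) ≤ 4 * (lam * e * B1) := by
    have t1 := mul_le_mul_of_nonneg_left hB1' (by positivity : (0:ℝ) ≤ 4 * (lam * e))
    have t2 := mul_le_mul_of_nonneg_left hupp (by positivity : (0:ℝ) ≤ 4 * (lam * e) * K)
    linarith
  have hρ4 : ρ ^ 4 ≤ gn ^ 4 := pow_le_pow_left₀ hρ.le hρg 4
  have hA3 : 4 * ρ ^ 4 * (lam ^ 4 * e ^ 3) ≤ 4 * (lam ^ 4 * e ^ 3 * gn ^ 4) := by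
    linarith [mul_le_mul_of_nonneg_left hρ4 (by positivity : (0:ℝ) ≤ 4 * (lam ^ 4 * e ^ 3))]
  have hB2' : -(K ^ 3) ≤ B2 := by
    nlinarith [neg_abs_le B2,
      mul_le_mul_of_nonneg_left (mul_le_mul hgK hgK hgn.le hK.le) hK.le]
  have hA4 : -(4 * K ^ 3) * (lam ^ 3 * e ^ 3) ≤ 4 * (lam ^ 3 * e ^ 3 * B2) := by
    linarith [mul_le_mul_of_nonneg_left hB2' (by positivity : (0:ℝ) ≤ 4 * (lam ^ 3 * e ^ 3))]
  have hLeP : lam * e ≤ lam ^ 3 * e ^ 3 := by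
    linarith [mul_le_mul_of_nonneg_left hsq1 (by positivity : (0:ℝ) ≤ lam * e)]
  have hB3' : -(K * K) ≤ B3 := by nlinarith [neg_abs_le B3]
  have hA5 : -(2 * K ^ 2) * (lam ^ 3 * e ^ 3) ≤ 2 * (lam * e * B3) := by
    have t1 := mul_le_mul_of_nonneg_left hB3' (by positivity : (0:ℝ) ≤ 2 * (lam * e))
    have t2 := mul_le_mul_of_nonneg_left hLeP (by positivity : (0:ℝ) ≤ 2 * K ^ 2)
    linarith
  have hA6 : (16 * K * (K ^ 2 + K) + 4 * K ^ 3 + 2 * K ^ 2 + 2 * ρ ^ 4) * (lam ^ 3 * e ^ 3)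
      ≤ 4 * ρ ^ 4 * (lam ^ 4 * e ^ 3) := by
    have hm : 16 * K * (K ^ 2 + K) + 4 * K ^ 3 + 2 * K ^ 2 + 2 * ρ ^ 4 ≤ 4 * ρ ^ 4 * lam := by
      rw [div_le_iff₀ (by positivity : (0:ℝ) < 4 * ρ ^ 4)] at hlam
      linarith
    linarith [mul_le_mul_of_nonneg_right hm (by positivity : (0:ℝ) ≤ lam ^ 3 * e ^ 3)]
  linarith [hA1, hA2, hA3, hA4, hA5, hA6]

theorem carleman_symbol_subellipticity
    (d : ℕ) (hd : 1 ≤ d) (K ρ : ℝ) (hK : 0 < K) (hρ : 0 < ρ)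
    (ψ V₀ : EuclideanSpace ℝ (Fin d) → ℝ)
    (hψ_smooth : ContDiff ℝ 2 ψ) (hψ_nonneg : ∀ x, 0 ≤ ψ x)
    -- |∂^α ψ| ≤ K for all 1 ≤ |α| ≤ 2:
    (hψ_d1 : ∀ x, ‖iteratedFDeriv ℝ 1 ψ x‖ ≤ K)
    (hψ_d2 : ∀ x, ‖iteratedFDeriv ℝ 2 ψ x‖ ≤ K)
    (hV_smooth : ContDiff ℝ 1 V₀)
    (hV_bdd : ∀ x, |V₀ x| ≤ K) (hV_d1 : ∀ x, ‖gradient V₀ x‖ ≤ K) :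
    ∃ lam₀ C : ℝ, 1 ≤ lam₀ ∧ 0 < C ∧
      ∀ lam : ℝ, lam₀ ≤ lam →
        ∀ x ξ : EuclideanSpace ℝ (Fin d),
          ρ ≤ ‖gradient ψ x‖ →
          (1 / 4) * (‖gradient (carlemanPhi lam ψ) x‖ ^ 2 + V₀ x) ≤ ‖ξ‖ ^ 2 →
          ‖ξ‖ ^ 2 ≤ 4 * (‖gradient (carlemanPhi lam ψ) x‖ ^ 2 + V₀ x) →
          C * lam ^ 3 * Real.exp (3 * lam * ψ x)
              ≤ poissonBracket (pRsymb lam ψ V₀) (pIsymb lam ψ) x ξ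
            ∧ 0 < poissonBracket (pRsymb lam ψ V₀) (pIsymb lam ψ) x ξ := by
  refine ⟨max 1 ((16 * K * (K ^ 2 + K) + 4 * K ^ 3 + 2 * K ^ 2 + 2 * ρ ^ 4) / (4 * ρ ^ 4)),
    2 * ρ ^ 4, le_max_left _ _, by positivity, ?_⟩
  intro lam hlam x ξ hρg hlow hupp
  have hlam1 : (1:ℝ) ≤ lam := le_trans (le_max_left _ _) hlam
  have hlampos : 0 < lam := lt_of_lt_of_le one_pos hlam1
  have he : 0 < Real.exp (lam * ψ x) := Real.exp_pos _
  have he1 : (1:ℝ) ≤ Real.exp (lam * ψ x) :=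
    Real.one_le_exp (mul_nonneg hlampos.le (hψ_nonneg x))
  have hbracket := bracket_formula (lam := lam) hψ_smooth hV_smooth x ξ
  have hgK : ‖gradient ψ x‖ ≤ K := by
    rw [norm_gradient_eq, norm_fderiv_eq_iteratedFDeriv_one]; exact hψ_d1 x
  have hHn : ‖fderiv ℝ (fderiv ℝ ψ) x‖ ≤ K := by
    rw [norm_fderiv2_eq_iteratedFDeriv_two]; exact hψ_d2 x
  have hH : ∀ v w : EuclideanSpace ℝ (Fin d),
      |fderiv ℝ (fderiv ℝ ψ) x v w| ≤ K * ‖v‖ * ‖w‖ := by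
    intro v w
    have h1 : ‖fderiv ℝ (fderiv ℝ ψ) x v w‖ ≤ ‖fderiv ℝ (fderiv ℝ ψ) x v‖ * ‖w‖ :=
      (fderiv ℝ (fderiv ℝ ψ) x v).le_opNorm w
    have h2 : ‖fderiv ℝ (fderiv ℝ ψ) x v‖ ≤ ‖fderiv ℝ (fderiv ℝ ψ) x‖ * ‖v‖ :=
      (fderiv ℝ (fderiv ℝ ψ) x).le_opNorm v
    have h3 : ‖fderiv ℝ (fderiv ℝ ψ) x‖ * ‖v‖ ≤ K * ‖v‖ :=
      mul_le_mul_of_nonneg_right hHn (norm_nonneg _)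
    calc |fderiv ℝ (fderiv ℝ ψ) x v w| ≤ ‖fderiv ℝ (fderiv ℝ ψ) x v‖ * ‖w‖ := h1
      _ ≤ (K * ‖v‖) * ‖w‖ :=
        mul_le_mul_of_nonneg_right (le_trans h2 h3) (norm_nonneg _)
  have hDV : |fderiv ℝ V₀ x (gradient ψ x)| ≤ K * K := by
    rw [fderiv_eq_inner_gradientV]
    calc |⟪gradient V₀ x, gradient ψ x⟫| ≤ ‖gradient V₀ x‖ * ‖gradient ψ x‖ :=
        abs_real_inner_le_norm _ _
      _ ≤ K * K := mul_le_mul (hV_d1 x) hgK (norm_nonneg _) hK.le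
  have h12 : (1:ℝ) ≤ lam * Real.exp (lam * ψ x) := by nlinarith
  have hsq1 : (1:ℝ) ≤ lam ^ 2 * Real.exp (lam * ψ x) ^ 2 := by
    nlinarith [h12, sq_nonneg (lam * Real.exp (lam * ψ x) - 1)]
  have hnormG : ‖gradient (carlemanPhi lam ψ) x‖ ^ 2
      = lam ^ 2 * Real.exp (lam * ψ x) ^ 2 * ‖gradient ψ x‖ ^ 2 := by
    rw [carlemanPhi_gradient hψ_smooth x, norm_smul]
    rw [show carlemanPhi lam ψ x = Real.exp (lam * ψ x) from rfl]
    rw [Real.norm_eq_abs, abs_of_pos (by positivity : (0:ℝ) < lam * Real.exp (lam * ψ x))]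
    ring
  have hgK2 : ‖gradient ψ x‖ ^ 2 ≤ K ^ 2 := by
    have := pow_le_pow_left₀ (norm_nonneg (gradient ψ x)) hgK 2
    simpa using this
  have hupp' : ‖ξ‖ ^ 2 ≤ 4 * (K ^ 2 + K) * (lam ^ 2 * Real.exp (lam * ψ x) ^ 2) := by
    have hVx : V₀ x ≤ K := le_trans (le_abs_self _) (hV_bdd x)
    have t1 := mul_le_mul_of_nonneg_left hgK2
      (by positivity : (0:ℝ) ≤ lam ^ 2 * Real.exp (lam * ψ x) ^ 2)
    have t2 : K ≤ K * (lam ^ 2 * Real.exp (lam * ψ x) ^ 2) :=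
      le_mul_of_one_le_right hK.le hsq1
    rw [hnormG] at hupp
    linarith
  have hexp3 : Real.exp (3 * lam * ψ x) = Real.exp (lam * ψ x) ^ 3 := by
    rw [show (3:ℝ) * lam * ψ x = lam * ψ x + (lam * ψ x + lam * ψ x) by ring,
      Real.exp_add, Real.exp_add]
    ring
  have hlamdiv : (16 * K * (K ^ 2 + K) + 4 * K ^ 3 + 2 * K ^ 2 + 2 * ρ ^ 4) / (4 * ρ ^ 4)
      ≤ lam := le_trans (le_max_right _ _) hlam
  have key := carleman_key_arith K ρ lam (Real.exp (lam * ψ x)) ‖ξ‖ ‖gradient ψ x‖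
    (fderiv ℝ ψ x ξ) (fderiv ℝ (fderiv ℝ ψ) x ξ ξ)
    (fderiv ℝ (fderiv ℝ ψ) x (gradient ψ x) (gradient ψ x))
    (fderiv ℝ V₀ x (gradient ψ x)) hK hρ hlam1 he1 hρg hgK (norm_nonneg ξ)
    (hH ξ ξ) (hH (gradient ψ x) (gradient ψ x)) hDV hupp' hlamdiv
  have hmain : 2 * ρ ^ 4 * lam ^ 3 * Real.exp (3 * lam * ψ x)
      ≤ poissonBracket (pRsymb lam ψ V₀) (pIsymb lam ψ) x ξ := by
    rw [hbracket, hexp3]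
    exact key
  refine ⟨hmain, ?_⟩
  have hpos : 0 < 2 * ρ ^ 4 * lam ^ 3 * Real.exp (3 * lam * ψ x) := by positivity
  linarith
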